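/- Energy identity for the power system (testing the HJB equation with m and the Fokker–Planck equation with u): if (u, m, H̄) is a classical solution of the power-type ergodic MFG system, then H̄ = ∫_Q [ ½(|P|² − |∇u|²) m − α^q m^{q+1} − v m ] dy. -/

import Mathlib

open MeasureTheory Real

/-- Partial derivative in direction `i`. -/
noncomputable def pd {n : ℕ} (i : Fin n) (f : (Fin n → ℝ) → ℝ) (x : Fin n → ℝ) : ℝ :=
  fderiv ℝ f x (Pi.single i 1)

/-- Laplacian: sum of second partial derivatives. -/
noncomputable def lap {n : ℕ} (f : (Fin n → ℝ) → ℝ) (x : Fin n → ℝ) : ℝ :=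
  ∑ i, pd i (pd i f) x

/-- Divergence of a vector field. -/
noncomputable def dvg {n : ℕ} (F : (Fin n → ℝ) → Fin n → ℝ) (x : Fin n → ℝ) : ℝ :=
  ∑ i, pd i (fun y => F y i) x

/-- `ℤⁿ`-periodicity. -/
def ZPeriodic {n : ℕ} (f : (Fin n → ℝ) → ℝ) : Prop :=
  ∀ (k : Fin n → ℤ) (x : Fin n → ℝ), f (x + fun i => (k i : ℝ)) = f x

/-- The unit cube `Q = [0,1]ⁿ`. -/
def unitCube (n : ℕ) : Set (Fin n → ℝ) := Set.Icc 0 1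

/-- A classical solution `(u, m, H)` of the power-type ergodic MFG system
`-Δu + ½|∇u+P|² - v - αᑫ mᑫ = H`, `-Δm - div(m(∇u+P)) = 0`, `∫ u = 0`, `∫ m = 1`. -/
structure PowerMFG {n : ℕ} (v : (Fin n → ℝ) → ℝ) (P : Fin n → ℝ) (α q : ℝ)
    (u m : (Fin n → ℝ) → ℝ) (H : ℝ) : Prop where
  hu : ContDiff ℝ 2 u
  hm : ContDiff ℝ 2 m
  hup : ZPeriodic u
  hmp : ZPeriodic m
  hmpos : ∀ x, 0 < m x
  hHJB : ∀ x, -lap u x + (∑ i, (pd i u x + P i) ^ 2) / 2 - v x - α ^ q * (m x) ^ q = H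
  hFP : ∀ x, -lap m x - dvg (fun y j => m y * (pd j u y + P j)) x = 0
  humean : (∫ y in unitCube n, u y) = 0
  hmmean : (∫ y in unitCube n, m y) = 1

/-! ### Auxiliary lemmas -/

lemma contDiff_pd {n : ℕ} {f : (Fin n → ℝ) → ℝ} (hf : ContDiff ℝ 2 f) (i : Fin n) :
    ContDiff ℝ 1 (pd i f) := by
  have h1 : ContDiff ℝ 1 (fderiv ℝ f) := hf.fderiv_right (by norm_num)
  exact (ContinuousLinearMap.apply ℝ ℝ (Pi.single i 1)).contDiff.comp h1

lemma continuous_pd {n : ℕ} {f : (Fin n → ℝ) → ℝ} (hf : ContDiff ℝ 1 f) (i : Fin n) :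
    Continuous (pd i f) :=
  (ContinuousLinearMap.apply ℝ ℝ (Pi.single i 1)).continuous.comp (hf.continuous_fderiv one_ne_zero)

lemma pd_periodic {n : ℕ} {f : (Fin n → ℝ) → ℝ} (hf : Differentiable ℝ f)
    (hp : ZPeriodic f) (i : Fin n) : ZPeriodic (pd i f) := by
  intro k x
  have h1 : HasFDerivAt (fun y : Fin n → ℝ => f (y + fun j => (k j : ℝ)))
      (fderiv ℝ f (x + fun j => (k j : ℝ))) x := by
    have := (hf (x + fun j => (k j : ℝ))).hasFDerivAt.comp x
      ((hasFDerivAt_id x).add_const (fun j => (k j : ℝ)))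
    simpa [Function.comp_def] using this
  have h2 : (fun y : Fin n → ℝ => f (y + fun j => (k j : ℝ))) = f := funext fun y => hp k y
  rw [h2] at h1
  unfold pd
  rw [← h1.fderiv]

lemma pd_add {n : ℕ} {f g : (Fin n → ℝ) → ℝ} {x : Fin n → ℝ}
    (hf : DifferentiableAt ℝ f x) (hg : DifferentiableAt ℝ g x) (i : Fin n) :
    pd i (fun y => f y + g y) x = pd i f x + pd i g x := by
  simp [pd, fderiv_fun_add hf hg]

lemma pd_sub {n : ℕ} {f g : (Fin n → ℝ) → ℝ} {x : Fin n → ℝ}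
    (hf : DifferentiableAt ℝ f x) (hg : DifferentiableAt ℝ g x) (i : Fin n) :
    pd i (fun y => f y - g y) x = pd i f x - pd i g x := by
  simp [pd, fderiv_fun_sub hf hg]

lemma pd_mul {n : ℕ} {f g : (Fin n → ℝ) → ℝ} {x : Fin n → ℝ}
    (hf : DifferentiableAt ℝ f x) (hg : DifferentiableAt ℝ g x) (i : Fin n) :
    pd i (fun y => f y * g y) x = pd i f x * g x + f x * pd i g x := by
  simp only [pd, fderiv_fun_mul hf hg, ContinuousLinearMap.add_apply, ContinuousLinearMap.smul_apply,
    smul_eq_mul]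
  ring

lemma pd_add_const {n : ℕ} {f : (Fin n → ℝ) → ℝ} {x : Fin n → ℝ} (c : ℝ) (i : Fin n) :
    pd i (fun y => f y + c) x = pd i f x := by
  simp [pd, fderiv_add_const]

lemma integral_pd_sum_zero {N : ℕ} (g : Fin (N + 1) → (Fin (N + 1) → ℝ) → ℝ)
    (hg : ∀ i, ContDiff ℝ 1 (g i)) (hper : ∀ i, ZPeriodic (g i)) :
    ∫ x in Set.Icc (0 : Fin (N + 1) → ℝ) 1, ∑ i, pd i (g i) x = 0 := by
  have hle : (0 : Fin (N + 1) → ℝ) ≤ 1 := fun i => zero_le_one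
  have hcont : Continuous fun x => ∑ i, pd i (g i) x :=
    continuous_finset_sum _ fun i _ => continuous_pd (hg i) i
  have hdiv := MeasureTheory.integral_divergence_of_hasFDerivAt_off_countable'
    (0 : Fin (N + 1) → ℝ) 1 hle g (fun i x => fderiv ℝ (g i) x) ∅ Set.countable_empty
    (fun i => (hg i).continuous.continuousOn)
    (fun x _ i => ((hg i).differentiable one_ne_zero x).hasFDerivAt)
    (hcont.integrableOn_Icc)
  have hface : ∀ (i : Fin (N + 1)) (x : Fin N → ℝ),
      g i (Fin.insertNth i ((1 : Fin (N + 1) → ℝ) i) x)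
        = g i (Fin.insertNth i ((0 : Fin (N + 1) → ℝ) i) x) := by
    intro i x
    have hx : Fin.insertNth i ((1 : Fin (N + 1) → ℝ) i) x
        = Fin.insertNth i ((0 : Fin (N + 1) → ℝ) i) x
          + fun j => (((Pi.single i 1 : Fin (N + 1) → ℤ) j : ℝ)) := by
      funext j
      rcases eq_or_ne j i with rfl | hji
      · simp
      · obtain ⟨j', rfl⟩ := Fin.exists_succAbove_eq hji
        simp [Fin.insertNth_apply_succAbove, Pi.single_apply,
          (Fin.succAbove_ne i j')]
    rw [hx, hper i (Pi.single i 1)]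
  have : (∫ x in Set.Icc (0 : Fin (N + 1) → ℝ) 1, ∑ i, fderiv ℝ (g i) x (Pi.single i 1)) = 0 := by
    rw [hdiv]
    refine Finset.sum_eq_zero fun i _ => ?_
    rw [sub_eq_zero]
    exact setIntegral_congr_fun measurableSet_Icc fun x _ => hface i x
  exact this

/-- Energy identity for the power system. -/
theorem power_mfg_energy_identity {n : ℕ} (hn : 1 ≤ n)
    (v : (Fin n → ℝ) → ℝ) (hv0 : ∀ x, 0 ≤ v x) (hvlip : ∃ K, LipschitzWith K v) (hvper : ZPeriodic v)
    (P : Fin n → ℝ) (α q : ℝ) (hα : 0 ≤ α) (hq : 0 < q)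
    (u m : (Fin n → ℝ) → ℝ) (H : ℝ)
    (h : PowerMFG v P α q u m H) :
    H = ∫ y in unitCube n,
      (((∑ i, (P i) ^ 2) - ∑ i, (pd i u y) ^ 2) / 2 * m y
        - α ^ q * (m y) ^ (q + 1) - v y * m y) := by
  obtain ⟨N, rfl⟩ : ∃ N, n = N + 1 := ⟨n - 1, by omega⟩
  have hud : Differentiable ℝ u := h.hu.differentiable two_ne_zero
  have hmd : Differentiable ℝ m := h.hm.differentiable two_ne_zero
  have hu1 : ContDiff ℝ 1 u := h.hu.of_le one_le_two
  have hm1 : ContDiff ℝ 1 m := h.hm.of_le one_le_two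
  have hpu : ∀ i, ContDiff ℝ 1 (pd i u) := fun i => contDiff_pd h.hu i
  have hpm : ∀ i, ContDiff ℝ 1 (pd i m) := fun i => contDiff_pd h.hm i
  have hvc : Continuous v := by obtain ⟨K, hK⟩ := hvlip; exact hK.continuous
  -- the test vector field
  set g : Fin (N + 1) → (Fin (N + 1) → ℝ) → ℝ :=
    fun i y => u y * (pd i m y + m y * (pd i u y + P i)) - m y * pd i u y with hgdef
  have hgc : ∀ i, ContDiff ℝ 1 (g i) := by
    intro i
    exact (hu1.mul ((hpm i).add (hm1.mul ((hpu i).add contDiff_const)))).sub (hm1.mul (hpu i))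
  have hgp : ∀ i, ZPeriodic (g i) := by
    intro i k x
    simp only [hgdef]
    rw [h.hup k x, h.hmp k x, pd_periodic hud h.hup i k x, pd_periodic hmd h.hmp i k x]
  -- the key derivative computation
  have hder : ∀ (y : Fin (N + 1) → ℝ) (i : Fin (N + 1)),
      pd i (g i) y = pd i u y * (pd i m y + m y * (pd i u y + P i))
        + u y * (pd i (pd i m) y + (pd i m y * (pd i u y + P i) + m y * pd i (pd i u) y))
        - (pd i m y * pd i u y + m y * pd i (pd i u) y) := by
    intro y i
    have dA : DifferentiableAt ℝ (pd i m) y := ((hpm i).differentiable one_ne_zero) y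
    have dB : DifferentiableAt ℝ (pd i u) y := ((hpu i).differentiable one_ne_zero) y
    have dBP : DifferentiableAt ℝ (fun z => pd i u z + P i) y := dB.add_const _
    have dF : DifferentiableAt ℝ (fun z => m z * (pd i u z + P i)) y := (hmd y).mul dBP
    have dAF : DifferentiableAt ℝ (fun z => pd i m z + m z * (pd i u z + P i)) y := dA.add dF
    have d1 : DifferentiableAt ℝ (fun z => u z * (pd i m z + m z * (pd i u z + P i))) y :=
      (hud y).mul dAF
    have d2 : DifferentiableAt ℝ (fun z => m z * pd i u z) y := (hmd y).mul dB
    simp only [hgdef]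
    rw [pd_sub d1 d2 i, pd_mul (hud y) dAF i, pd_mul (hmd y) dB i, pd_add dA dF i,
      pd_mul (hmd y) dBP i, pd_add_const (P i) i]
  -- divergence expansion
  have hdvg : ∀ y, dvg (fun z j => m z * (pd j u z + P j)) y
      = ∑ i, (pd i m y * (pd i u y + P i) + m y * pd i (pd i u) y) := by
    intro y
    refine Finset.sum_congr rfl fun i _ => ?_
    rw [pd_mul (hmd y) ((((hpu i).differentiable one_ne_zero) y).add_const _) i, pd_add_const (P i) i]
  -- pointwise identity
  have hpt : ∀ y, (-lap u y + (∑ i, (pd i u y + P i) ^ 2) / 2 - v y - α ^ q * (m y) ^ q) * m y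
      = (((∑ i, (P i) ^ 2) - ∑ i, (pd i u y) ^ 2) / 2 * m y
          - α ^ q * (m y) ^ (q + 1) - v y * m y) + ∑ i, pd i (g i) y := by
    intro y
    have hFP0 : lap m y + dvg (fun z j => m z * (pd j u z + P j)) y = 0 := by
      have := h.hFP y; linarith
    have e1 : ∑ i, pd i (g i) y
        = m y * (∑ i, (pd i u y) ^ 2) + m y * (∑ i, pd i u y * P i) - m y * lap u y
          + u y * (lap m y + dvg (fun z j => m z * (pd j u z + P j)) y) := by
      have e0 : ∀ i : Fin (N + 1), pd i (g i) y
          = (m y * (pd i u y) ^ 2 + m y * (pd i u y * P i) - m y * pd i (pd i u) y)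
            + u y * (pd i (pd i m) y + (pd i m y * (pd i u y + P i) + m y * pd i (pd i u) y)) := by
        intro i
        rw [hder y i]; ring
      rw [Finset.sum_congr rfl fun i _ => e0 i, Finset.sum_add_distrib]
      congr 1
      · rw [Finset.sum_sub_distrib, Finset.sum_add_distrib, ← Finset.mul_sum, ← Finset.mul_sum,
          ← Finset.mul_sum, lap]
      · rw [lap, hdvg y, ← Finset.mul_sum, Finset.sum_add_distrib]
    have f1 : ∑ i, (pd i u y + P i) ^ 2
        = (∑ i, (pd i u y) ^ 2) + 2 * (∑ i, pd i u y * P i) + ∑ i, (P i) ^ 2 := by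
      rw [Finset.mul_sum, ← Finset.sum_add_distrib, ← Finset.sum_add_distrib]
      exact Finset.sum_congr rfl fun i _ => by ring
    have f4 : (m y) ^ (q + 1) = (m y) ^ q * m y := by
      rw [Real.rpow_add (h.hmpos y), Real.rpow_one]
    rw [e1, hFP0, mul_zero, add_zero, f1, f4]
    ring
  -- integrability
  have hcQ : ∀ {f : (Fin (N + 1) → ℝ) → ℝ}, Continuous f → IntegrableOn f (unitCube (N + 1)) :=
    fun hf => hf.integrableOn_Icc
  have hcont_tgt : Continuous fun y =>
      (((∑ i, (P i) ^ 2) - ∑ i, (pd i u y) ^ 2) / 2 * m y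
        - α ^ q * (m y) ^ (q + 1) - v y * m y) := by
    have h1 : Continuous fun y => ∑ i, (pd i u y) ^ 2 :=
      continuous_finset_sum _ fun i _ => ((hpu i).continuous).pow 2
    have h2 : Continuous fun y => (m y) ^ (q + 1) :=
      hm1.continuous.rpow_const fun y => Or.inl (h.hmpos y).ne'
    exact ((((continuous_const.sub h1).div_const 2).mul hm1.continuous).sub
      (continuous_const.mul h2)).sub (hvc.mul hm1.continuous)
  have hcont_div : Continuous fun y => ∑ i, pd i (g i) y :=
    continuous_finset_sum _ fun i _ => continuous_pd (hgc i) i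
  -- main computation
  have hHm : H = ∫ y in unitCube (N + 1), H * m y := by
    rw [MeasureTheory.integral_const_mul, h.hmmean, mul_one]
  rw [hHm]
  have step1 : (fun y => H * m y) = fun y =>
      (((∑ i, (P i) ^ 2) - ∑ i, (pd i u y) ^ 2) / 2 * m y
        - α ^ q * (m y) ^ (q + 1) - v y * m y) + ∑ i, pd i (g i) y := by
    funext y
    rw [← h.hHJB y, hpt y]
  rw [step1, MeasureTheory.integral_add (hcQ hcont_tgt) (hcQ hcont_div)]
  have : (∫ y in unitCube (N + 1), ∑ i, pd i (g i) y) = 0 :=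
    integral_pd_sum_zero g hgc hgp
  rw [this, add_zero]
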